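/- Let σ be a primitive invertible substitution on the two-letter alphabet 𝒜 = {a,b} with det M_σ = 1. Then the following are equivalent: (1) σ is selfdual; (2) there exist positive integers m, k with k ∣ m²−1 such that M_σ = [[m, k],[(m²−1)/k, m]], or positive integers m, k with m ∣ k²+1 such that M_σ = [[m, k],[k, (k²+1)/m]]; (3) Q⁻¹ · M_σ · Q = M_σ⁻¹ for Q = [[−1,0],[0,1]] or for Q = [[0,−1],[1,0]]; (4) Pᵀ · M_σ · P = M_σᵀ for P = [[0,1],[1,0]] or for P = the identity matrix. -/

import Mathlib

open scoped Matrix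

/-- The two-letter alphabet `𝒜 = {a, b}`; the letter `a` is `0` and the letter `b` is `1`. -/
abbrev A2 := Fin 2

/-- A substitution on the two-letter alphabet, given by the images of the two letters.
(The nonerasing condition is stated separately as `TwoSubst.NonErasing`.) -/
abbrev Subst := A2 → List A2

namespace TwoSubst

/-- A substitution is non-erasing if the images of the letters are nonempty words. -/
def NonErasing (σ : Subst) : Prop := ∀ i : A2, σ i ≠ []

/-- The extension of a substitution to finite words (the morphism of the free monoid). -/
def apply (σ : Subst) (w : List A2) : List A2 := w.flatMap σ

/-- The `n`-th power `σ^n` of a substitution (as a substitution). -/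
def substPow (σ : Subst) (n : ℕ) : Subst := fun i => (apply σ)^[n] [i]

/-- Composition of substitutions: `(σ ∘ τ)(i) = σ(τ(i))`. -/
def comp (σ τ : Subst) : Subst := fun i => apply σ (τ i)

/-- The substitution matrix `M_σ`: entry `(i, j)` is the number of occurrences of the
letter `i` in `σ(j)`. -/
def M (σ : Subst) : Matrix (Fin 2) (Fin 2) ℤ := fun i j => ((σ j).count i : ℤ)

/-- A substitution is primitive if some power of its substitution matrix has all
entries positive. -/
def Primitive (σ : Subst) : Prop := ∃ n : ℕ, 0 < n ∧ ∀ i j, 0 < (M σ ^ n) i j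

/-- A finite word, regarded as an element of the free group `F₂`. -/
def toFG (w : List A2) : FreeGroup A2 := (w.map FreeGroup.of).prod

/-- The endomorphism of the free group `F₂` induced by a substitution. -/
def endo (σ : Subst) : Monoid.End (FreeGroup A2) := FreeGroup.lift fun i => toFG (σ i)

/-- A substitution is invertible if its extension to the free group `F₂` is an
automorphism of `F₂`. -/
def IsInvertible (σ : Subst) : Prop := Function.Bijective (endo σ)

/-- Two substitutions are conjugate, `σ ~ ρ`, if `σ = γ_w ∘ ρ` as endomorphisms of `F₂`
for some `w ∈ F₂`, where `γ_w x = w * x * w⁻¹`. -/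
def Conj (σ ρ : Subst) : Prop := ∃ w : FreeGroup A2, ∀ x, endo σ x = w * endo ρ x * w⁻¹

/-- `w` is a (finite) factor of the bi-infinite word `u : ℤ → A2`. -/
def IsFactor (w : List A2) (u : ℤ → A2) : Prop :=
  ∃ k : ℤ, w = (List.range w.length).map fun i => u (k + i)

/-- The hull `X_σ`: the set of bi-infinite words all of whose finite factors appear as
factors of `σ^n(a)` or `σ^n(b)` for some `n ∈ ℕ`. -/
def Hull (σ : Subst) : Set (ℤ → A2) :=
  { u | ∀ w : List A2, IsFactor w u → ∃ (n : ℕ) (x : A2), w <:+: substPow σ n x }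

/-- The substitution `E : a ↦ b, b ↦ a`. -/
def Esub : Subst := ![[1], [0]]

/-- The substitution `L : a ↦ a, b ↦ ab`. -/
def Lsub : Subst := ![[0], [0, 1]]

/-- The composition `L^{a₁} ∘ E ∘ L^{a₂} ∘ E ∘ ⋯ ∘ E ∘ L^{a_m}` encoded by the
nonempty list of exponents `a₁ :: [a₂, …, a_m]`. -/
def chain : ℕ → List ℕ → Subst
  | a, [] => substPow Lsub a
  | a, b :: rest => comp (substPow Lsub a) (comp Esub (chain b rest))

/-- The letter-exchange map `a ↦ b, b ↦ a` on letters. -/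
def swapA : A2 → A2 := fun i => if i = 0 then 1 else 0

/-- The substitution matrix with real entries. -/
noncomputable def Mreal (σ : Subst) : Matrix (Fin 2) (Fin 2) ℝ := (M σ).map fun z => (z : ℝ)

/-- `lam` is the inflation factor (Perron–Frobenius eigenvalue) of `σ`: it is an
eigenvalue of `M_σ` admitting a positive eigenvector. -/
def IsInflation (σ : Subst) (lam : ℝ) : Prop :=
  ∃ v : Fin 2 → ℝ, (∀ i, 0 < v i) ∧ (Mreal σ).mulVec v = lam • v

/-- `α` is the frequency of `σ`: `α ∈ (0,1)` and `(1-α, α)` is an eigenvector of `M_σ`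
for an eigenvalue with positive eigenvector (necessarily the Perron-Frobenius
eigenvalue, i.e. the inflation factor, when `σ` is primitive). -/
def IsFreq (σ : Subst) (α : ℝ) : Prop :=
  0 < α ∧ α < 1 ∧ ∃ lam : ℝ, (Mreal σ).mulVec ![1 - α, α] = lam • ![1 - α, α]

/-- The automorphism `τ_a : a ↦ a⁻¹, b ↦ b` of the free group `F₂`. -/
def tauA : Monoid.End (FreeGroup A2) :=
  FreeGroup.lift fun i : A2 => if i = 0 then (FreeGroup.of (0 : A2))⁻¹ else FreeGroup.of 1

/-- `ρ` is the reciprocal substitution `σ̄ = τ_a ∘ σ⁻¹ ∘ τ_a⁻¹` of `σ`, where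
`φ` is the inverse automorphism `σ⁻¹` (note `τ_a⁻¹ = τ_a`). -/
def IsReciprocal (σ ρ : Subst) (φ : Monoid.End (FreeGroup A2)) : Prop :=
  (∀ x, φ (endo σ x) = x) ∧ (∀ x, endo σ (φ x) = x) ∧
    NonErasing ρ ∧ ∀ x, endo ρ x = tauA (φ (tauA x))

/-- `σ` is a selfdual substitution (relative to its reciprocal `ρ = σ̄`):
`σ ~ σ̄` or `σ ~ E ∘ σ̄ ∘ E`. -/
def SelfDual (σ ρ : Subst) : Prop :=
  Conj σ ρ ∨ Conj σ (comp Esub (comp ρ Esub))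

/-! ### Strands and dual maps -/

/-- Integer vectors in the plane. -/
abbrev V2 := Fin 2 → ℤ

/-- The abelianisation map `A : 𝒜* → ℤ²`, counting occurrences of each letter. -/
def Avec (w : List A2) : V2 := fun i => (w.count i : ℤ)

/-- The space `𝒢` (and its dual `𝒢*`): formal finite real linear combinations of the
basis elements `(W, i)` (resp. `(W, i*)`), `W ∈ ℤ²`, `i ∈ 𝒜`. -/
abbrev Gspace := (V2 × A2) →₀ ℝ

/-- The image of the basis element `(W, i)` under `E₁(σ)`. -/
noncomputable def E1Basis (σ : Subst) (p : V2 × A2) : Gspace :=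
  ∑ k ∈ Finset.range (σ p.2).length,
    Finsupp.single ((M σ).mulVec p.1 + Avec ((σ p.2).take k), (σ p.2).getD k p.2) (1 : ℝ)

/-- The one-dimensional extension `E₁(σ)`, as a linear map on `𝒢`. -/
noncomputable def E1 (σ : Subst) : Gspace →ₗ[ℝ] Gspace :=
  Finsupp.lift Gspace ℝ (V2 × A2) (E1Basis σ)

/-- The image of the basis element `(W, i*)` under the dual map `E₁*(σ)`:
`E₁*(σ)(W, i*) = Σ_{j,k : σ(j)_k = i} (M_σ⁻¹·(W + A(σ(j)_{k+1}⋯σ(j)_{|σ(j)|})), j*)`. -/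
noncomputable def E1starBasis (σ : Subst) (p : V2 × A2) : Gspace :=
  ∑ j : A2, ∑ k ∈ Finset.range (σ j).length,
    if (σ j).getD k j = p.2 then
      Finsupp.single ((M σ)⁻¹.mulVec (p.1 + Avec ((σ j).drop (k + 1))), j) (1 : ℝ)
    else 0

/-- The dual map `E₁*(σ)`, as a linear map on `𝒢*`. -/
noncomputable def E1star (σ : Subst) : Gspace →ₗ[ℝ] Gspace :=
  Finsupp.lift Gspace ℝ (V2 × A2) (E1starBasis σ)

/-- The basis vector `e_a = (1,0)`. -/
def ea : V2 := ![1, 0]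

/-- The basis vector `e_b = (0,1)`. -/
def eb : V2 := ![0, 1]

/-- `γ(0), …, γ(n)` is a finite dual strand: each step is `e_a` or `-e_b`. -/
def IsDualStrand (n : ℕ) (γ : ℕ → V2) : Prop :=
  ∀ k < n, γ (k + 1) - γ k = ea ∨ γ (k + 1) - γ k = -eb

/-- The element of `𝒢*` associated with a finite dual strand `γ(0), …, γ(n)`:
the sum of `(γ(k), b*)` over the `e_a`-steps and `(γ(k+1), a*)` over the `-e_b`-steps
(the letter `a` is `0`, the letter `b` is `1`). -/
noncomputable def strandElem (n : ℕ) (γ : ℕ → V2) : Gspace :=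
  ∑ k ∈ Finset.range n,
    if γ (k + 1) - γ k = ea then Finsupp.single (γ k, (1 : A2)) (1 : ℝ)
    else Finsupp.single (γ (k + 1), (0 : A2)) (1 : ℝ)

/-! ### Endomorphisms of the free group -/

/-- The exponent-sum homomorphism of the generator `i` on `F₂`. -/
def expSum (i : A2) : FreeGroup A2 →* Multiplicative ℤ :=
  FreeGroup.lift fun j : A2 => Multiplicative.ofAdd (if j = i then (1 : ℤ) else 0)

/-- The abelianised matrix of an endomorphism of `F₂`: entry `(i,j)` is the exponent
sum of the generator `i` in the image of the generator `j`. -/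
def abelMatrix (σ : Monoid.End (FreeGroup A2)) : Matrix (Fin 2) (Fin 2) ℤ :=
  fun i j => Multiplicative.toAdd (expSum i (σ (FreeGroup.of j)))

/-- `wprod ρ w k = w · ρ(w) · ρ²(w) ⋯ ρ^{k−1}(w)`. -/
def wprod (ρ : Monoid.End (FreeGroup A2)) (w : FreeGroup A2) : ℕ → FreeGroup A2
  | 0 => 1
  | k + 1 => wprod ρ w k * (ρ ^ k) w

end TwoSubst
set_option linter.dupNamespace false

namespace TwoSubst

/-! ### Basic word / free group lemmas -/

lemma toFG_append (w₁ w₂ : List A2) : toFG (w₁ ++ w₂) = toFG w₁ * toFG w₂ := by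
  simp [toFG]

lemma toFG_cons (c : A2) (w : List A2) : toFG (c :: w) = FreeGroup.of c * toFG w := by
  simp [toFG]

lemma toFG_singleton (c : A2) : toFG [c] = FreeGroup.of c := by simp [toFG]

lemma endo_of (σ : Subst) (i : A2) : endo σ (FreeGroup.of i) = toFG (σ i) :=
  FreeGroup.lift_apply_of

lemma apply_cons (σ : Subst) (c : A2) (w : List A2) :
    apply σ (c :: w) = σ c ++ apply σ w := by simp [apply]

lemma endo_toFG (σ : Subst) (w : List A2) : endo σ (toFG w) = toFG (apply σ w) := by
  induction w with
  | nil => simp [toFG, apply]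
  | cons c w ih => rw [toFG_cons, map_mul, endo_of, ih, apply_cons, toFG_append]

lemma endo_comp (σ τ : Subst) :
    (endo (comp σ τ) : FreeGroup A2 →* FreeGroup A2) = (endo σ).comp (endo τ) := by
  apply FreeGroup.ext_hom; intro i
  show endo (comp σ τ) (FreeGroup.of i) = endo σ (endo τ (FreeGroup.of i))
  rw [endo_of, endo_of, endo_toFG]; rfl

lemma endo_comp_apply (σ τ : Subst) (x : FreeGroup A2) :
    endo (comp σ τ) x = endo σ (endo τ x) := by
  rw [endo_comp]; rfl

/-! ### Counting -/

lemma count_flatMap (g : Subst) (l : List A2) (i : A2) :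
    (l.flatMap g).count i = ((l.map fun c => (g c).count i).sum) := by
  induction l with
  | nil => simp
  | cons c l ih => simp [List.count_append, ih]

lemma sum_map_count (f : A2 → ℕ) (l : List A2) :
    (l.map f).sum = l.count 0 * f 0 + l.count 1 * f 1 := by
  induction l with
  | nil => simp
  | cons c l ih =>
    fin_cases c <;> simp [ih, List.count_cons] <;> ring

lemma length_eq_counts (l : List A2) : l.length = l.count 0 + l.count 1 := by
  induction l with
  | nil => simp
  | cons c l ih => fin_cases c <;> simp [ih, List.count_cons] <;> ring

lemma M_apply (σ : Subst) (i j : A2) : M σ i j = ((σ j).count i : ℤ) := rfl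

lemma M_comp (σ τ : Subst) : M (comp σ τ) = M σ * M τ := by
  ext i j
  rw [Matrix.mul_apply, Fin.sum_univ_two]
  show (((τ j).flatMap σ).count i : ℤ) = _
  rw [count_flatMap, sum_map_count]
  simp [M_apply]
  push_cast
  ring

lemma apply_ne_nil (σ : Subst) (hσ : NonErasing σ) {w : List A2} (hw : w ≠ []) :
    apply σ w ≠ [] := by
  cases w with
  | nil => exact absurd rfl hw
  | cons c w =>
    rw [apply_cons]
    intro h
    exact hσ c (by simpa using (List.append_eq_nil_iff.mp h).1)

/-! ### Exponent sums and abelianized matrices -/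

lemma expSum_of (i j : A2) :
    expSum i (FreeGroup.of j) = Multiplicative.ofAdd (if j = i then (1 : ℤ) else 0) := by
  simp [expSum]

lemma expSum_toFG (i : A2) (w : List A2) :
    Multiplicative.toAdd (expSum i (toFG w)) = (w.count i : ℤ) := by
  induction w with
  | nil => simp [toFG]
  | cons c w ih =>
    rw [toFG_cons, map_mul, toAdd_mul, ih, expSum_of, List.count_cons]
    by_cases h : c = i
    · simp [h, eq_comm]
      omega
    · simp [h, Ne.symm h]

lemma abelMatrix_endo (σ : Subst) : abelMatrix (endo σ) = M σ := by
  ext i j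
  show Multiplicative.toAdd (expSum i (endo σ (FreeGroup.of j))) = _
  rw [endo_of, expSum_toFG]; rfl

/-- The linear-combination homomorphism used to compute exponent sums through
endomorphisms. -/
def linComb (c : A2 → ℤ) : FreeGroup A2 →* Multiplicative ℤ where
  toFun y := Multiplicative.ofAdd (∑ k : A2, c k * Multiplicative.toAdd (expSum k y))
  map_one' := by simp
  map_mul' x y := by
    show Multiplicative.ofAdd _ = Multiplicative.ofAdd _ * Multiplicative.ofAdd _
    rw [← ofAdd_add, ← Finset.sum_add_distrib]
    congr 1
    refine Finset.sum_congr rfl fun k _ => ?_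
    rw [map_mul, toAdd_mul]
    ring

lemma expSum_comp_eq_linComb (f : Monoid.End (FreeGroup A2)) (i : A2) :
    (expSum i).comp (f : FreeGroup A2 →* FreeGroup A2) = linComb (abelMatrix f i) := by
  apply FreeGroup.ext_hom; intro j
  show expSum i (f (FreeGroup.of j)) = _
  have : ∀ k : A2, Multiplicative.toAdd (expSum k (FreeGroup.of j))
      = if j = k then (1:ℤ) else 0 := by
    intro k; rw [expSum_of]; rfl
  show _ = Multiplicative.ofAdd (∑ k : A2, abelMatrix f i k * Multiplicative.toAdd (expSum k (FreeGroup.of j)))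
  simp only [this]
  rw [Fin.sum_univ_two]
  fin_cases j <;> simp [abelMatrix] <;> rfl

lemma expSum_end (f : Monoid.End (FreeGroup A2)) (i : A2) (y : FreeGroup A2) :
    Multiplicative.toAdd (expSum i (f y))
      = ∑ k : A2, abelMatrix f i k * Multiplicative.toAdd (expSum k y) := by
  have h := congrFun (congrArg DFunLike.coe (expSum_comp_eq_linComb f i)) y
  have h' : expSum i (f y) = linComb (abelMatrix f i) y := h
  rw [h']; rfl

lemma abelMatrix_comp (F f g : Monoid.End (FreeGroup A2)) (h : ∀ x, F x = f (g x)) :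
    abelMatrix F = abelMatrix f * abelMatrix g := by
  ext i j
  rw [Matrix.mul_apply]
  show Multiplicative.toAdd (expSum i (F (FreeGroup.of j))) = _
  rw [h, expSum_end]
  apply Finset.sum_congr rfl
  intro k _
  rfl

lemma abelMatrix_id (F : Monoid.End (FreeGroup A2)) (h : ∀ x, F x = x) :
    abelMatrix F = 1 := by
  ext i j
  show Multiplicative.toAdd (expSum i (F (FreeGroup.of j))) = _
  rw [h, expSum_of]
  rw [Matrix.one_apply]
  by_cases hij : i = j <;> simp [hij, eq_comm]

lemma abelMatrix_conj (F G : Monoid.End (FreeGroup A2)) (w : FreeGroup A2)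
    (h : ∀ x, F x = w * G x * w⁻¹) : abelMatrix F = abelMatrix G := by
  ext i j
  show Multiplicative.toAdd (expSum i (F (FreeGroup.of j))) = _
  have key : (expSum i) (w * G (FreeGroup.of j) * w⁻¹) = expSum i (G (FreeGroup.of j)) := by
    rw [map_mul, map_mul, map_inv, mul_comm ((expSum i) w), mul_inv_cancel_right]
  rw [h, key]
  rfl

lemma abelMatrix_tauA : abelMatrix tauA = !![(-1 : ℤ), 0; 0, 1] := by
  ext i j
  show Multiplicative.toAdd (expSum i (tauA (FreeGroup.of j))) = _
  have h0 : tauA (FreeGroup.of (0 : A2)) = (FreeGroup.of (0 : A2))⁻¹ :=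
    FreeGroup.lift_apply_of
  have h1 : tauA (FreeGroup.of (1 : A2)) = FreeGroup.of (1 : A2) :=
    FreeGroup.lift_apply_of
  fin_cases i <;> fin_cases j <;>
    simp [h0, h1, map_inv, expSum_of, toAdd_inv] <;> rfl

end TwoSubst
namespace TwoSubst

/-! ### 2×2 integer matrix computations -/

lemma M_nonneg (σ : Subst) (i j : A2) : 0 ≤ M σ i j := Int.natCast_nonneg _

lemma M_entries_pos {σ : Subst} (hprim : Primitive σ) (hdet : (M σ).det = 1) :
    ∀ i j, 0 < M σ i j := by
  obtain ⟨n, hn, hpos⟩ := hprim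
  have hq : 0 < M σ 0 1 := by
    by_contra h
    have hq0 : M σ 0 1 = 0 := le_antisymm (not_lt.mp h) (M_nonneg σ 0 1)
    have hz : ∀ m, (M σ ^ m) 0 1 = 0 := by
      intro m; induction m with
      | zero => simp [Matrix.one_apply]
      | succ k ih => rw [pow_succ, Matrix.mul_apply, Fin.sum_univ_two, ih, hq0]; ring
    have := hpos 0 1
    rw [hz n] at this
    exact lt_irrefl 0 this
  have hr : 0 < M σ 1 0 := by
    by_contra h
    have hr0 : M σ 1 0 = 0 := le_antisymm (not_lt.mp h) (M_nonneg σ 1 0)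
    have hz : ∀ m, (M σ ^ m) 1 0 = 0 := by
      intro m; induction m with
      | zero => simp [Matrix.one_apply]
      | succ k ih => rw [pow_succ, Matrix.mul_apply, Fin.sum_univ_two, ih, hr0]; ring
    have := hpos 1 0
    rw [hz n] at this
    exact lt_irrefl 0 this
  have hdet2 : M σ 0 0 * M σ 1 1 - M σ 0 1 * M σ 1 0 = 1 := by
    rw [← Matrix.det_fin_two]; exact hdet
  have h00 := M_nonneg σ 0 0
  have h11 := M_nonneg σ 1 1
  intro i j; fin_cases i <;> fin_cases j <;> simp <;> nlinarith

/-- Explicit inverse of a 2×2 integer matrix with determinant 1. -/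
def adj2 (A : Matrix (Fin 2) (Fin 2) ℤ) : Matrix (Fin 2) (Fin 2) ℤ :=
  !![A 1 1, -(A 0 1); -(A 1 0), A 0 0]

lemma mul_adj2 {A : Matrix (Fin 2) (Fin 2) ℤ} (h : A.det = 1) : A * adj2 A = 1 := by
  rw [Matrix.det_fin_two] at h
  ext i j
  fin_cases i <;> fin_cases j <;>
    simp [adj2, Matrix.mul_apply, Fin.sum_univ_two, Matrix.one_apply] <;> linarith

lemma adj2_mul {A : Matrix (Fin 2) (Fin 2) ℤ} (h : A.det = 1) : adj2 A * A = 1 := by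
  rw [Matrix.det_fin_two] at h
  ext i j
  fin_cases i <;> fin_cases j <;>
    simp [adj2, Matrix.mul_apply, Fin.sum_univ_two, Matrix.one_apply] <;> linarith

lemma inv_eq_adj2 {A : Matrix (Fin 2) (Fin 2) ℤ} (h : A.det = 1) : A⁻¹ = adj2 A :=
  Matrix.inv_eq_right_inv (mul_adj2 h)

lemma left_inv_eq_adj2 {A B : Matrix (Fin 2) (Fin 2) ℤ} (h : A.det = 1)
    (hBA : B * A = 1) : B = adj2 A := by
  calc B = B * (A * adj2 A) := by rw [mul_adj2 h, mul_one]
  _ = (B * A) * adj2 A := by rw [mul_assoc]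
  _ = adj2 A := by rw [hBA, one_mul]

lemma cond2_iff {A : Matrix (Fin 2) (Fin 2) ℤ} (h : A.det = 1) :
    ((!![(-1 : ℤ), 0; 0, 1])⁻¹ * A * !![(-1 : ℤ), 0; 0, 1] = A⁻¹ ∨
      (!![(0 : ℤ), -1; 1, 0])⁻¹ * A * !![(0 : ℤ), -1; 1, 0] = A⁻¹)
    ↔ (A 0 0 = A 1 1 ∨ A 0 1 = A 1 0) := by
  have hQ1 : (!![(-1 : ℤ), 0; 0, 1])⁻¹ = !![(-1 : ℤ), 0; 0, 1] :=
    Matrix.inv_eq_right_inv (by ext i j; fin_cases i <;> fin_cases j <;>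
      simp [Matrix.mul_apply, Fin.sum_univ_two, Matrix.one_apply])
  have hQ2 : (!![(0 : ℤ), -1; 1, 0])⁻¹ = !![(0 : ℤ), 1; -1, 0] :=
    Matrix.inv_eq_right_inv (by ext i j; fin_cases i <;> fin_cases j <;>
      simp [Matrix.mul_apply, Fin.sum_univ_two, Matrix.one_apply])
  rw [hQ1, hQ2, inv_eq_adj2 h]
  obtain ⟨p, q, r, s, rfl⟩ : ∃ p q r s, A = !![p, q; r, s] :=
    ⟨_, _, _, _, Matrix.eta_fin_two A⟩
  simp [adj2, Matrix.mul_fin_two, ← Matrix.ext_iff, Fin.forall_fin_two, funext_iff]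
  omega

lemma cond3_iff (A : Matrix (Fin 2) (Fin 2) ℤ) :
    ((!![(0 : ℤ), 1; 1, 0])ᵀ * A * !![(0 : ℤ), 1; 1, 0] = Aᵀ ∨
      (1 : Matrix (Fin 2) (Fin 2) ℤ)ᵀ * A * (1 : Matrix (Fin 2) (Fin 2) ℤ) = Aᵀ)
    ↔ (A 0 0 = A 1 1 ∨ A 0 1 = A 1 0) := by
  obtain ⟨p, q, r, s, rfl⟩ : ∃ p q r s, A = !![p, q; r, s] :=
    ⟨_, _, _, _, Matrix.eta_fin_two A⟩
  rw [show (!![(0 : ℤ), 1; 1, 0])ᵀ = !![(0 : ℤ), 1; 1, 0] by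
    ext i j; fin_cases i <;> fin_cases j <;> simp, Matrix.transpose_one, one_mul, mul_one,
    show (!![p, q; r, s])ᵀ = !![p, r; q, s] by
      ext i j; fin_cases i <;> fin_cases j <;> simp]
  simp [Matrix.mul_fin_two, Matrix.one_fin_two, ← Matrix.ext_iff, Fin.forall_fin_two,
    funext_iff, Matrix.transpose_apply]
  omega

lemma cond1_iff {A : Matrix (Fin 2) (Fin 2) ℤ} (h : A.det = 1)
    (hpos : ∀ i j, 0 < A i j) :
    ((∃ m k : ℤ, 0 < m ∧ 0 < k ∧ k ∣ m ^ 2 - 1 ∧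
        A = !![m, k; (m ^ 2 - 1) / k, m]) ∨
      (∃ m k : ℤ, 0 < m ∧ 0 < k ∧ m ∣ k ^ 2 + 1 ∧
        A = !![m, k; k, (k ^ 2 + 1) / m]))
    ↔ (A 0 0 = A 1 1 ∨ A 0 1 = A 1 0) := by
  have hdet2 : A 0 0 * A 1 1 - A 0 1 * A 1 0 = 1 := by
    rw [← Matrix.det_fin_two]; exact h
  constructor
  · rintro (⟨m, k, hm, hk, hdvd, hA⟩ | ⟨m, k, hm, hk, hdvd, hA⟩)
    · left; rw [hA]; simp
    · right; rw [hA]; simp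
  · have h00 := hpos 0 0
    have h01 := hpos 0 1
    have h10 := hpos 1 0
    have h11 := hpos 1 1
    rintro (hd | hd)
    · left
      refine ⟨A 0 0, A 0 1, h00, h01, ?_, ?_⟩
      · exact ⟨A 1 0, by nlinarith⟩
      · have hmul : A 0 0 ^ 2 - 1 = A 0 1 * A 1 0 := by nlinarith
        ext i j
        fin_cases i <;> fin_cases j <;>
          simp [hmul, Int.mul_ediv_cancel_left _ (ne_of_gt h01)]
        · exact hd.symm ▸ rfl
    · right
      refine ⟨A 0 0, A 0 1, h00, h01, ?_, ?_⟩
      · exact ⟨A 1 1, by nlinarith⟩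
      · have hmul : A 0 1 ^ 2 + 1 = A 0 0 * A 1 1 := by nlinarith
        ext i j
        fin_cases i <;> fin_cases j <;>
          simp [hmul, Int.mul_ediv_cancel_left _ (ne_of_gt h00)]
        · exact hd.symm

end TwoSubst
namespace TwoSubst

/-! ### Partial deterministic graphs and the induced permutation action -/

/-- A "folded graph" on vertex set `ℕ`: for each letter, a partial injection given
by `next` (the edge map) and `prev` (its inverse). -/
structure PGraph where
  next : A2 → ℕ → Option ℕ
  prev : A2 → ℕ → Option ℕ
  compat : ∀ x m n, next x m = some n ↔ prev x n = some m

namespace PGraph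

variable (Γ : PGraph)

/-- The permutation of `ℕ ⊕ ℕ` canonically extending the partial injection
`next x` on the first copy. -/
def perm (x : A2) : Equiv.Perm (ℕ ⊕ ℕ) where
  toFun z :=
    match z with
    | .inl s =>
      match Γ.next x s with
      | some t => .inl t
      | none => .inr s
    | .inr t =>
      match Γ.prev x t with
      | some s => .inr s
      | none => .inl t
  invFun z :=
    match z with
    | .inl t =>
      match Γ.prev x t with
      | some s => .inl s
      | none => .inr t
    | .inr s =>
      match Γ.next x s with
      | some t => .inr t
      | none => .inl s
  left_inv := by
    rintro (s | t)
    · cases h : Γ.next x s with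
      | some t =>
        have h' := (Γ.compat x s t).mp h
        simp [h, h']
      | none => simp [h]
    · cases h : Γ.prev x t with
      | some s =>
        have h' := (Γ.compat x s t).mpr h
        simp [h, h']
      | none => simp [h]
  right_inv := by
    rintro (t | s)
    · cases h : Γ.prev x t with
      | some s =>
        have h' := (Γ.compat x s t).mpr h
        simp [h, h']
      | none => simp [h]
    · cases h : Γ.next x s with
      | some t =>
        have h' := (Γ.compat x s t).mp h
        simp [h, h']
      | none => simp [h]

lemma perm_inl_of_next {x : A2} {s t : ℕ} (h : Γ.next x s = some t) :
    Γ.perm x (Sum.inl s) = Sum.inl t := by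
  simp [perm, h]

lemma next_of_perm_inl {x : A2} {s t : ℕ} (h : Γ.perm x (Sum.inl s) = Sum.inl t) :
    Γ.next x s = some t := by
  rcases hn : Γ.next x s with _ | t'
  · simp [perm, hn] at h
  · simp [perm, hn] at h
    exact congrArg some h

/-- The homomorphism `F₂ → Perm (ℕ ⊕ ℕ)` induced by a folded graph. -/
def hom : FreeGroup A2 →* Equiv.Perm (ℕ ⊕ ℕ) := FreeGroup.lift fun i => Γ.perm i

lemma hom_of (x : A2) : Γ.hom (FreeGroup.of x) = Γ.perm x := FreeGroup.lift_apply_of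

/-- Reading a word along a path of the graph. -/
lemma hom_toFG (w : List A2) (pos : ℕ → ℕ)
    (hstep : ∀ k, k < w.length → Γ.next (w.getD k 0) (pos (k + 1)) = some (pos k)) :
    Γ.hom (toFG w) (Sum.inl (pos w.length)) = Sum.inl (pos 0) := by
  induction w generalizing pos with
  | nil => simp [toFG]
  | cons c t ih =>
    rw [toFG_cons, map_mul]
    have h1 : Γ.hom (toFG t) (Sum.inl (pos (t.length + 1))) = Sum.inl (pos 1) := by
      have := ih (fun k => pos (k + 1)) (fun k hk => by
        have := hstep (k + 1) (by simpa using Nat.succ_lt_succ hk)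
        simpa using this)
      simpa using this
    have hl : (c :: t).length = t.length + 1 := rfl
    rw [hl, Equiv.Perm.mul_apply, h1, hom_of]
    exact Γ.perm_inl_of_next (by simpa using hstep 0 (Nat.succ_pos _))

/-- If the two words of a generating pair read as loops at the base point `0`,
then every letter must have a loop edge at the base point. -/
lemma loops_of_basis (u v : List A2)
    (hbasis : Subgroup.closure {toFG u, toFG v} = ⊤)
    (hu : Γ.hom (toFG u) (Sum.inl 0) = Sum.inl 0)
    (hv : Γ.hom (toFG v) (Sum.inl 0) = Sum.inl 0)
    (x : A2) : Γ.next x 0 = some 0 := by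
  have hsub : Subgroup.closure {toFG u, toFG v} ≤
      Subgroup.comap Γ.hom (MulAction.stabilizer (Equiv.Perm (ℕ ⊕ ℕ)) (Sum.inl 0 : ℕ ⊕ ℕ)) := by
    rw [Subgroup.closure_le]
    rintro g (rfl | rfl)
    · exact hu
    · exact hv
  rw [hbasis] at hsub
  have hx : Γ.hom (FreeGroup.of x) ∈
      MulAction.stabilizer (Equiv.Perm (ℕ ⊕ ℕ)) (Sum.inl 0 : ℕ ⊕ ℕ) :=
    hsub (Subgroup.mem_top _)
  have hx' : Γ.perm x (Sum.inl 0) = Sum.inl 0 := by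
    have := hx.out
    rwa [hom_of] at this
  exact Γ.next_of_perm_inl hx'

end PGraph

/-! ### Graphs from edge lists -/

/-- The next-map determined by an edge list. -/
def findNext (E : List (ℕ × A2 × ℕ)) (x : A2) (n : ℕ) : Option ℕ :=
  (E.find? fun e => decide (e.1 = n ∧ e.2.1 = x)).map fun e => e.2.2

/-- The prev-map determined by an edge list. -/
def findPrev (E : List (ℕ × A2 × ℕ)) (x : A2) (n : ℕ) : Option ℕ :=
  (E.find? fun e => decide (e.2.2 = n ∧ e.2.1 = x)).map fun e => e.1

/-- Determinism of an edge list. -/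
def EdgeDet (E : List (ℕ × A2 × ℕ)) : Prop :=
  ∀ e ∈ E, ∀ e' ∈ E, e.1 = e'.1 → e.2.1 = e'.2.1 → e.2.2 = e'.2.2

/-- Co-determinism of an edge list. -/
def EdgeCodet (E : List (ℕ × A2 × ℕ)) : Prop :=
  ∀ e ∈ E, ∀ e' ∈ E, e.2.2 = e'.2.2 → e.2.1 = e'.2.1 → e.1 = e'.1

lemma findNext_eq_some_iff {E : List (ℕ × A2 × ℕ)} (hdet : EdgeDet E)
    {x : A2} {n m : ℕ} : findNext E x n = some m ↔ (n, x, m) ∈ E := by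
  constructor
  · intro h
    rcases Option.map_eq_some_iff.mp h with ⟨e, he, hm⟩
    have hmem := List.mem_of_find?_eq_some he
    have hp := List.find?_some he
    have h1 : e.1 = n ∧ e.2.1 = x := by simpa using hp
    have : e = (n, x, m) := by
      rcases e with ⟨e1, e2, e3⟩
      simp only at h1 hm
      simp [h1.1, h1.2, hm]
    rwa [this] at hmem
  · intro h
    have hsome : (E.find? fun e => decide (e.1 = n ∧ e.2.1 = x)).isSome := by
      rw [List.find?_isSome]
      exact ⟨(n, x, m), h, by simp⟩
    rcases Option.isSome_iff_exists.mp hsome with ⟨e, he⟩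
    have hmem := List.mem_of_find?_eq_some he
    have hp := List.find?_some he
    have h1 : e.1 = n ∧ e.2.1 = x := by simpa using hp
    have h3 := hdet e hmem (n, x, m) h (by simpa using h1.1) (by simpa using h1.2)
    simp only at h3
    show (E.find? fun e => decide (e.1 = n ∧ e.2.1 = x)).map (fun e => e.2.2) = some m
    rw [he]
    simp [h3]

lemma findPrev_eq_some_iff {E : List (ℕ × A2 × ℕ)} (hcodet : EdgeCodet E)
    {x : A2} {n m : ℕ} : findPrev E x n = some m ↔ (m, x, n) ∈ E := by
  constructor
  · intro h
    rcases Option.map_eq_some_iff.mp h with ⟨e, he, hm⟩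
    have hmem := List.mem_of_find?_eq_some he
    have hp := List.find?_some he
    have h1 : e.2.2 = n ∧ e.2.1 = x := by simpa using hp
    have : e = (m, x, n) := by
      rcases e with ⟨e1, e2, e3⟩
      simp only at h1 hm
      simp [h1.1, h1.2, hm]
    rwa [this] at hmem
  · intro h
    have hsome : (E.find? fun e => decide (e.2.2 = n ∧ e.2.1 = x)).isSome := by
      rw [List.find?_isSome]
      exact ⟨(m, x, n), h, by simp⟩
    rcases Option.isSome_iff_exists.mp hsome with ⟨e, he⟩
    have hmem := List.mem_of_find?_eq_some he
    have hp := List.find?_some he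
    have h1 : e.2.2 = n ∧ e.2.1 = x := by simpa using hp
    have h3 := hcodet e hmem (m, x, n) h (by simpa using h1.1) (by simpa using h1.2)
    simp only at h3
    show (E.find? fun e => decide (e.2.2 = n ∧ e.2.1 = x)).map (fun e => e.1) = some m
    rw [he]
    simp [h3]

/-- The folded graph associated with a deterministic and co-deterministic edge
list. -/
def edgeGraph (E : List (ℕ × A2 × ℕ)) (hdet : EdgeDet E) (hcodet : EdgeCodet E) :
    PGraph where
  next := findNext E
  prev := findPrev E
  compat x m n := by
    rw [findNext_eq_some_iff hdet, findPrev_eq_some_iff hcodet]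

end TwoSubst
namespace TwoSubst

/-! ### The theta graph of a pair of words with common suffix stripped -/

/-- Position encoding for the `u`-circle. -/
def posU (a m k : ℕ) : ℕ := if k = 0 then 0 else if a ≤ k then a + m - k else m + k

/-- Position encoding for the `v`-circle. -/
def posV (a b m k : ℕ) : ℕ :=
  if k = 0 then 0 else if b ≤ k then b + m - k else (m + a - 1) + k

lemma posU_inj {a m k l : ℕ} (hk : k ≤ a + m) (hl : l ≤ a + m)
    (h : posU a m k = posU a m l) : k = l ∨ (k = 0 ∧ l = a + m) ∨ (k = a + m ∧ l = 0) := by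
  unfold posU at h; split_ifs at h <;> omega

lemma posV_inj {a b m k l : ℕ} (ha : 1 ≤ a) (hk : k ≤ b + m) (hl : l ≤ b + m)
    (h : posV a b m k = posV a b m l) : k = l ∨ (k = 0 ∧ l = b + m) ∨ (k = b + m ∧ l = 0) := by
  unfold posV at h; split_ifs at h <;> omega

lemma posUV1 {a b m k l : ℕ} (ha : 1 ≤ a) (hb : 1 ≤ b) (hk0 : 1 ≤ k) (hk : k ≤ a + m)
    (hl0 : 1 ≤ l) (hl : l ≤ b + m) (h : posU a m k = posV a b m l) :
    a ≤ k ∧ b ≤ l ∧ (a + m) - k = (b + m) - l := by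
  unfold posU posV at h; split_ifs at h <;> omega

lemma posUV0 {a b m k l : ℕ} (ha : 1 ≤ a) (hb : 1 ≤ b) (hk : k < a + m) (hl : l < b + m)
    (h : posU a m k = posV a b m l) :
    (k = 0 ∧ l = 0) ∨ (a ≤ k ∧ b ≤ l ∧ (a + m) - k = (b + m) - l ∧ 1 ≤ k ∧ 1 ≤ l) := by
  unfold posU posV at h; split_ifs at h <;> omega

lemma posU_spine {a m k : ℕ} (h1 : a ≤ k) (h2 : k ≤ a + m) (h3 : 1 ≤ a) :
    posU a m k = a + m - k := by
  unfold posU; split_ifs <;> omega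

lemma posV_spine {a b m k : ℕ} (h1 : b ≤ k) (h2 : k ≤ b + m) (h3 : 1 ≤ b) :
    posV a b m k = b + m - k := by
  unfold posV; split_ifs <;> omega

lemma posU_zero (a m : ℕ) : posU a m 0 = 0 := by simp [posU]

lemma posV_zero (a b m : ℕ) : posV a b m 0 = 0 := by simp [posV]

lemma posU_top {a m : ℕ} (h : 1 ≤ a) : posU a m (a + m) = 0 := by
  unfold posU; split_ifs <;> omega

lemma posV_top {a b m : ℕ} (h : 1 ≤ b) : posV a b m (b + m) = 0 := by
  unfold posV; split_ifs <;> omega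

lemma posU_eq_zero {a m k : ℕ} (hk : k ≤ a + m) (h : posU a m k = 0) :
    k = 0 ∨ k = a + m := by
  unfold posU at h; split_ifs at h <;> omega

lemma posV_eq_zero {a b m k : ℕ} (ha : 1 ≤ a) (hk : k ≤ b + m) (h : posV a b m k = 0) :
    k = 0 ∨ k = b + m := by
  unfold posV at h; split_ifs at h <;> omega

/-- Edge list of the theta graph of the pair `(u' ++ s, v' ++ s)`. -/
def thetaEdges (u' v' s : List A2) : List (ℕ × A2 × ℕ) :=
  ((List.range (u'.length + s.length)).map fun k =>
    (posU u'.length s.length (k + 1), (u' ++ s).getD k 0, posU u'.length s.length k)) ++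
  ((List.range (v'.length + s.length)).map fun k =>
    (posV u'.length v'.length s.length (k + 1), (v' ++ s).getD k 0,
      posV u'.length v'.length s.length k))

lemma mem_thetaEdges {u' v' s : List A2} {e : ℕ × A2 × ℕ} :
    e ∈ thetaEdges u' v' s ↔
      (∃ k < u'.length + s.length,
        e = (posU u'.length s.length (k + 1), (u' ++ s).getD k 0,
          posU u'.length s.length k)) ∨
      (∃ k < v'.length + s.length,
        e = (posV u'.length v'.length s.length (k + 1), (v' ++ s).getD k 0,
          posV u'.length v'.length s.length k)) := by
  simp only [thetaEdges, List.mem_append, List.mem_map, List.mem_range]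
  constructor
  · rintro (⟨k, hk, rfl⟩ | ⟨k, hk, rfl⟩)
    · exact Or.inl ⟨k, hk, rfl⟩
    · exact Or.inr ⟨k, hk, rfl⟩
  · rintro (⟨k, hk, rfl⟩ | ⟨k, hk, rfl⟩)
    · exact Or.inl ⟨k, hk, rfl⟩
    · exact Or.inr ⟨k, hk, rfl⟩

lemma theta_det {u' v' s : List A2} (ha : u' ≠ []) (hb : v' ≠ [])
    (hlast : u'.getD (u'.length - 1) 0 ≠ v'.getD (v'.length - 1) 0) :
    EdgeDet (thetaEdges u' v' s) := by
  have ha' : 1 ≤ u'.length := List.length_pos_iff.mpr ha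
  have hb' : 1 ≤ v'.length := List.length_pos_iff.mpr hb
  intro e he e' he' h1 h2
  rw [mem_thetaEdges] at he he'
  rcases he with ⟨k, hk, rfl⟩ | ⟨k, hk, rfl⟩ <;>
    rcases he' with ⟨l, hl, rfl⟩ | ⟨l, hl, rfl⟩ <;> simp only at h1 h2 ⊢
  · -- U, U
    have := posU_inj (by omega) (by omega) h1
    have : k = l := by omega
    rw [this]
  · -- U, V
    obtain ⟨hA', hB', hC⟩ := posUV1 ha' hb' (by omega) (by omega) (by omega) (by omega) h1
    by_cases hcase : k + 1 = u'.length
    · have hlb : l + 1 = v'.length := by omega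
      exfalso
      apply hlast
      have e1 : (u' ++ s).getD k 0 = u'.getD (u'.length - 1) 0 := by
        rw [List.getD_append _ _ _ _ (by omega)]
        congr 1
        omega
      have e2 : (v' ++ s).getD l 0 = v'.getD (v'.length - 1) 0 := by
        rw [List.getD_append _ _ _ _ (by omega)]
        congr 1
        omega
      rw [← e1, ← e2]
      exact h2
    · rw [posU_spine (by omega) (by omega) ha', posV_spine (by omega) (by omega) hb']
      omega
  · -- V, U
    obtain ⟨hA', hB', hC⟩ := posUV1 ha' hb' (by omega) (by omega) (by omega) (by omega) h1.symm
    by_cases hcase : k + 1 = v'.length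
    · have hla : l + 1 = u'.length := by omega
      exfalso
      apply hlast
      have e1 : (v' ++ s).getD k 0 = v'.getD (v'.length - 1) 0 := by
        rw [List.getD_append _ _ _ _ (by omega)]
        congr 1
        omega
      have e2 : (u' ++ s).getD l 0 = u'.getD (u'.length - 1) 0 := by
        rw [List.getD_append _ _ _ _ (by omega)]
        congr 1
        omega
      rw [← e1, ← e2]
      exact h2.symm
    · rw [posU_spine (by omega) (by omega) ha', posV_spine (by omega) (by omega) hb']
      omega
  · -- V, V
    have := posV_inj ha' (by omega) (by omega) h1
    have : k = l := by omega
    rw [this]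

lemma theta_codet {u' v' s : List A2} (ha : u' ≠ []) (hb : v' ≠ [])
    (hfirst : u'.getD 0 0 ≠ v'.getD 0 0) :
    EdgeCodet (thetaEdges u' v' s) := by
  have ha' : 1 ≤ u'.length := List.length_pos_iff.mpr ha
  have hb' : 1 ≤ v'.length := List.length_pos_iff.mpr hb
  intro e he e' he' h1 h2
  rw [mem_thetaEdges] at he he'
  rcases he with ⟨k, hk, rfl⟩ | ⟨k, hk, rfl⟩ <;>
    rcases he' with ⟨l, hl, rfl⟩ | ⟨l, hl, rfl⟩ <;> simp only at h1 h2 ⊢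
  · -- U, U
    have := posU_inj (le_of_lt hk) (le_of_lt hl) h1
    have : k = l := by omega
    rw [this]
  · -- U, V
    rcases posUV0 ha' hb' hk hl h1 with ⟨hk0, hl0⟩ | ⟨hA, hB, hC, hk1, hl1⟩
    · exfalso
      apply hfirst
      have e1 : (u' ++ s).getD k 0 = u'.getD 0 0 := by
        rw [List.getD_append _ _ _ _ (by omega)]
        rw [hk0]
      have e2 : (v' ++ s).getD l 0 = v'.getD 0 0 := by
        rw [List.getD_append _ _ _ _ (by omega)]
        rw [hl0]
      rw [← e1, ← e2]
      exact h2
    · rw [posU_spine (by omega) (by omega) ha', posV_spine (by omega) (by omega) hb']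
      omega
  · -- V, U
    rcases posUV0 ha' hb' hl hk h1.symm with ⟨hl0, hk0⟩ | ⟨hA, hB, hC, hl1, hk1⟩
    · exfalso
      apply hfirst
      have e1 : (v' ++ s).getD k 0 = v'.getD 0 0 := by
        rw [List.getD_append _ _ _ _ (by omega)]
        rw [hk0]
      have e2 : (u' ++ s).getD l 0 = u'.getD 0 0 := by
        rw [List.getD_append _ _ _ _ (by omega)]
        rw [hl0]
      rw [← e1, ← e2]
      exact h2.symm
    · rw [posU_spine (by omega) (by omega) ha', posV_spine (by omega) (by omega) hb']
      omega
  · -- V, V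
    have := posV_inj ha' (le_of_lt hk) (le_of_lt hl) h1
    have : k = l := by omega
    rw [this]

/-- The theta graph as a folded graph. -/
noncomputable def thetaGraph {u' v' s : List A2} (ha : u' ≠ []) (hb : v' ≠ [])
    (hfirst : u'.getD 0 0 ≠ v'.getD 0 0)
    (hlast : u'.getD (u'.length - 1) 0 ≠ v'.getD (v'.length - 1) 0) : PGraph :=
  edgeGraph (thetaEdges u' v' s) (theta_det ha hb hlast) (theta_codet ha hb hfirst)

lemma theta_loop_u {u' v' s : List A2} (ha : u' ≠ []) (hb : v' ≠ [])
    (hfirst : u'.getD 0 0 ≠ v'.getD 0 0)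
    (hlast : u'.getD (u'.length - 1) 0 ≠ v'.getD (v'.length - 1) 0) :
    (thetaGraph (s := s) ha hb hfirst hlast).hom (toFG (u' ++ s)) (Sum.inl 0) = Sum.inl 0 := by
  have ha' : 1 ≤ u'.length := List.length_pos_iff.mpr ha
  have h0 : posU u'.length s.length ((u' ++ s).length) = 0 := by
    rw [List.length_append]
    exact posU_top ha'
  have h1 : posU u'.length s.length 0 = 0 := posU_zero _ _
  have hpath := (thetaGraph (s := s) ha hb hfirst hlast).hom_toFG (u' ++ s)
    (fun k => posU u'.length s.length k) ?_
  · rw [h0, h1] at hpath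
    exact hpath
  · intro k hk
    apply (findNext_eq_some_iff (theta_det ha hb hlast)).mpr
    rw [mem_thetaEdges]
    left
    exact ⟨k, by simpa [List.length_append] using hk, rfl⟩

lemma theta_loop_v {u' v' s : List A2} (ha : u' ≠ []) (hb : v' ≠ [])
    (hfirst : u'.getD 0 0 ≠ v'.getD 0 0)
    (hlast : u'.getD (u'.length - 1) 0 ≠ v'.getD (v'.length - 1) 0) :
    (thetaGraph (s := s) ha hb hfirst hlast).hom (toFG (v' ++ s)) (Sum.inl 0) = Sum.inl 0 := by
  have hb' : 1 ≤ v'.length := List.length_pos_iff.mpr hb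
  have h0 : posV u'.length v'.length s.length ((v' ++ s).length) = 0 := by
    rw [List.length_append]
    exact posV_top hb'
  have h1 : posV u'.length v'.length s.length 0 = 0 := posV_zero _ _ _
  have hpath := (thetaGraph (s := s) ha hb hfirst hlast).hom_toFG (v' ++ s)
    (fun k => posV u'.length v'.length s.length k) ?_
  · rw [h0, h1] at hpath
    exact hpath
  · intro k hk
    apply (findNext_eq_some_iff (theta_det ha hb hlast)).mpr
    rw [mem_thetaEdges]
    right
    exact ⟨k, by simpa [List.length_append] using hk, rfl⟩

lemma theta_base_loop {u' v' s : List A2} (ha : u' ≠ []) (hb : v' ≠ []) {x : A2}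
    (h : (0, x, 0) ∈ thetaEdges u' v' s) :
    u' ++ s = [x] ∨ v' ++ s = [x] := by
  have ha' : 1 ≤ u'.length := List.length_pos_iff.mpr ha
  have hb' : 1 ≤ v'.length := List.length_pos_iff.mpr hb
  rw [mem_thetaEdges] at h
  rcases h with ⟨k, hk, he⟩ | ⟨k, hk, he⟩
  · left
    have h1 : posU u'.length s.length (k + 1) = 0 := by
      have := congrArg Prod.fst he; simpa using this.symm
    have h3 : posU u'.length s.length k = 0 := by
      have := congrArg (fun p : ℕ × A2 × ℕ => p.2.2) he; simpa using this.symm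
    have hx : (u' ++ s).getD k 0 = x := by
      have := congrArg (fun p : ℕ × A2 × ℕ => p.2.1) he; simpa using this.symm
    have e1 := posU_eq_zero (a := u'.length) (m := s.length) (by omega) h1
    have e3 := posU_eq_zero (a := u'.length) (m := s.length) (by omega) h3
    have hlen : u'.length + s.length = 1 ∧ k = 0 := by omega
    have hl1 : (u' ++ s).length = 1 := by rw [List.length_append]; exact hlen.1
    rcases List.length_eq_one_iff.mp hl1 with ⟨c, hc⟩
    have hcd : (u' ++ s).getD 0 0 = c := by rw [hc]; rfl
    rw [hc]
    congr 1
    rw [← hx, hlen.2, hcd]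
  · right
    have h1 : posV u'.length v'.length s.length (k + 1) = 0 := by
      have := congrArg Prod.fst he; simpa using this.symm
    have h3 : posV u'.length v'.length s.length k = 0 := by
      have := congrArg (fun p : ℕ × A2 × ℕ => p.2.2) he; simpa using this.symm
    have hx : (v' ++ s).getD k 0 = x := by
      have := congrArg (fun p : ℕ × A2 × ℕ => p.2.1) he; simpa using this.symm
    have e1 := posV_eq_zero (a := u'.length) ha' (by omega) h1
    have e3 := posV_eq_zero (a := u'.length) ha' (by omega) h3
    have hlen : v'.length + s.length = 1 ∧ k = 0 := by omega
    have hl1 : (v' ++ s).length = 1 := by rw [List.length_append]; exact hlen.1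
    rcases List.length_eq_one_iff.mp hl1 with ⟨c, hc⟩
    have hcd : (v' ++ s).getD 0 0 = c := by rw [hc]; rfl
    rw [hc]
    congr 1
    rw [← hx, hlen.2, hcd]

/-- **Key rigidity lemma.** A generating pair of positive words with distinct first
letters and (after removing a common suffix `s`) distinct last letters must be the
pair of letters. -/
lemma theta_key {u' v' s : List A2} (ha : u' ≠ []) (hb : v' ≠ [])
    (hfirst : u'.getD 0 0 ≠ v'.getD 0 0)
    (hlast : u'.getD (u'.length - 1) 0 ≠ v'.getD (v'.length - 1) 0)
    (hbasis : Subgroup.closure {toFG (u' ++ s), toFG (v' ++ s)} = ⊤) :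
    (u' ++ s = [0] ∧ v' ++ s = [1]) ∨ (u' ++ s = [1] ∧ v' ++ s = [0]) := by
  have hloop : ∀ x : A2, u' ++ s = [x] ∨ v' ++ s = [x] := by
    intro x
    have hx := (thetaGraph (s := s) ha hb hfirst hlast).loops_of_basis
      (u' ++ s) (v' ++ s) hbasis (theta_loop_u ha hb hfirst hlast)
      (theta_loop_v ha hb hfirst hlast) x
    have hmem : (0, x, 0) ∈ thetaEdges u' v' s :=
      (findNext_eq_some_iff (theta_det ha hb hlast)).mp hx
    exact theta_base_loop ha hb hmem
  rcases hloop 0 with h0 | h0 <;> rcases hloop 1 with h1 | h1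
  · exact absurd (h0.symm.trans h1) (by simp)
  · exact Or.inl ⟨h0, h1⟩
  · exact Or.inr ⟨h1, h0⟩
  · exact absurd (h0.symm.trans h1) (by simp)

end TwoSubst
namespace TwoSubst

/-! ### Common prefixes, suffixes, rotations -/

/-- Length of the longest common prefix. -/
def lcpN : List A2 → List A2 → ℕ
  | x :: xs, y :: ys => if x = y then lcpN xs ys + 1 else 0
  | _, _ => 0

lemma lcpN_cons {x y : A2} {xs ys : List A2} :
    lcpN (x :: xs) (y :: ys) = if x = y then lcpN xs ys + 1 else 0 := rfl

lemma lcpN_append_single {c : A2} :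
    ∀ {p q : List A2}, p.length = q.length → p ≠ q →
      lcpN (p ++ [c]) (q ++ [c]) = lcpN p q := by
  intro p
  induction p with
  | nil =>
    intro q hlen hne
    cases q with
    | nil => exact absurd rfl hne
    | cons d q => simp at hlen
  | cons a p ih =>
    intro q hlen hne
    cases q with
    | nil => simp at hlen
    | cons b q =>
      by_cases hab : a = b
      · subst hab
        have hpq : p ≠ q := by intro h; exact hne (by rw [h])
        simp only [List.cons_append, lcpN_cons, if_pos rfl]
        rw [ih (by simpa using hlen) hpq]
      · simp only [List.cons_append, lcpN_cons, if_neg hab]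

/-- Longest common prefix decomposition. -/
lemma exists_lcp (u : List A2) : ∀ v : List A2, ∃ u₁ v₁ p,
    u = p ++ u₁ ∧ v = p ++ v₁ ∧ (u₁ = [] ∨ v₁ = [] ∨ u₁.getD 0 0 ≠ v₁.getD 0 0) := by
  induction u with
  | nil => intro v; exact ⟨[], v, [], rfl, rfl, Or.inl rfl⟩
  | cons c u ih =>
    intro v
    cases v with
    | nil => exact ⟨c :: u, [], [], rfl, rfl, Or.inr (Or.inl rfl)⟩
    | cons d v =>
      by_cases hcd : c = d
      · obtain ⟨u₁, v₁, p, h1, h2, h3⟩ := ih v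
        subst hcd
        exact ⟨u₁, v₁, c :: p, by rw [List.cons_append, ← h1], by rw [List.cons_append, ← h2], h3⟩
      · refine ⟨c :: u, d :: v, [], rfl, rfl, Or.inr (Or.inr ?_)⟩
        simpa using hcd

lemma getD_last_reverse (l : List A2) :
    l.reverse.getD (l.reverse.length - 1) 0 = l.getD 0 0 := by
  cases l with
  | nil => rfl
  | cons c t =>
    have h1 : (c :: t).reverse = t.reverse ++ [c] := by simp
    rw [h1]
    have h2 : (t.reverse ++ [c]).length - 1 = t.reverse.length := by simp
    rw [h2, List.getD_append_right _ _ _ _ (le_refl _)]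
    simp

/-- Longest common suffix decomposition. -/
lemma exists_lcs (u v : List A2) : ∃ u₁ v₁ s,
    u = u₁ ++ s ∧ v = v₁ ++ s ∧
      (u₁ = [] ∨ v₁ = [] ∨ u₁.getD (u₁.length - 1) 0 ≠ v₁.getD (v₁.length - 1) 0) := by
  obtain ⟨u₁, v₁, p, h1, h2, h3⟩ := exists_lcp u.reverse v.reverse
  refine ⟨u₁.reverse, v₁.reverse, p.reverse, ?_, ?_, ?_⟩
  · have := congrArg List.reverse h1
    simpa [List.reverse_append] using this
  · have := congrArg List.reverse h2
    simpa [List.reverse_append] using this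
  · rcases h3 with h | h | h
    · left; simp [h]
    · right; left; simp [h]
    · right; right
      rw [getD_last_reverse u₁, getD_last_reverse v₁]
      exact h

/-! ### Commuting generators cannot generate `F₂` -/

lemma closure_pair_comm {G : Type*} [Group G] {x y : G} (hxy : Commute x y) :
    ∀ g ∈ Subgroup.closure ({x, y} : Set G), ∀ h ∈ Subgroup.closure ({x, y} : Set G),
      Commute g h := by
  have key : ∀ z ∈ ({x, y} : Set G), ∀ h ∈ Subgroup.closure ({x, y} : Set G), Commute z h := by
    rintro z hz h hh
    induction hh using Subgroup.closure_induction with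
    | mem w hw =>
      rcases hz with rfl | rfl <;> rcases hw with rfl | rfl
      · exact Commute.refl _
      · exact hxy
      · exact hxy.symm
      · exact Commute.refl _
    | one => exact Commute.one_right _
    | mul a b _ _ iha ihb => exact iha.mul_right ihb
    | inv a _ iha => exact iha.inv_right
  intro g hg h hh
  induction hg using Subgroup.closure_induction with
  | mem z hz => exact key z hz h hh
  | one => exact Commute.one_left _
  | mul a b _ _ iha ihb => exact iha.mul_left ihb
  | inv a _ iha => exact iha.inv_left

lemma of_ne_comm : ¬ Commute (FreeGroup.of (0 : A2)) (FreeGroup.of (1 : A2)) := by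
  intro h
  have h' := congrArg (FreeGroup.lift ![Equiv.swap (0 : Fin 3) 1, Equiv.swap (1 : Fin 3) 2]) h
  rw [map_mul, map_mul, FreeGroup.lift_apply_of, FreeGroup.lift_apply_of] at h'
  have : (![Equiv.swap (0 : Fin 3) 1, Equiv.swap (1 : Fin 3) 2] : A2 → Equiv.Perm (Fin 3)) 0 *
      ![Equiv.swap (0 : Fin 3) 1, Equiv.swap (1 : Fin 3) 2] 1 =
      ![Equiv.swap (0 : Fin 3) 1, Equiv.swap (1 : Fin 3) 2] 1 *
      ![Equiv.swap (0 : Fin 3) 1, Equiv.swap (1 : Fin 3) 2] 0 := h'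
  simp only [Matrix.cons_val_zero, Matrix.cons_val_one, Matrix.head_cons] at this
  exact absurd this (by decide)

lemma no_commuting_basis {u v : List A2}
    (hcl : Subgroup.closure {toFG u, toFG v} = ⊤)
    (hcomm : u ++ v = v ++ u) : False := by
  have h1 : toFG u * toFG v = toFG v * toFG u := by
    rw [← toFG_append, ← toFG_append, hcomm]
  have h2 := closure_pair_comm (x := toFG u) (y := toFG v) h1
  apply of_ne_comm
  apply h2 <;> rw [hcl] <;> exact Subgroup.mem_top _

/-! ### Conjugating a generating pair -/

lemma closure_conj {x y : FreeGroup A2} (w : FreeGroup A2)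
    (h : Subgroup.closure {x, y} = ⊤) :
    Subgroup.closure {w * x * w⁻¹, w * y * w⁻¹} = ⊤ := by
  have hmap : Subgroup.map (MulAut.conj w).toMonoidHom (Subgroup.closure {x, y})
      = Subgroup.closure {w * x * w⁻¹, w * y * w⁻¹} := by
    rw [MonoidHom.map_closure]
    congr 1
    rw [Set.image_pair]
    simp [MulAut.conj_apply]
  rw [← hmap, h]
  apply Subgroup.map_top_of_surjective
  exact MulEquiv.surjective _

/-- Base pair predicate. -/
def BasePair (u v : List A2) : Prop := (u = [0] ∧ v = [1]) ∨ (u = [1] ∧ v = [0])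

/-- **Normalization lemma:** every generating pair of positive words is conjugate
(by a single group element) to a generating pair which is the base pair or has a
suffix relation. -/
lemma spade (n : ℕ) : ∀ u v : List A2, u ≠ [] → v ≠ [] →
    Subgroup.closure {toFG u, toFG v} = ⊤ → lcpN (u ++ v) (v ++ u) ≤ n →
    ∃ (w : FreeGroup A2) (u' v' : List A2), u' ≠ [] ∧ v' ≠ [] ∧
      toFG u = w * toFG u' * w⁻¹ ∧ toFG v = w * toFG v' * w⁻¹ ∧
      Subgroup.closure {toFG u', toFG v'} = ⊤ ∧
      (BasePair u' v' ∨ (∃ x, x ≠ [] ∧ v' = x ++ u') ∨ (∃ x, x ≠ [] ∧ u' = x ++ v')) := by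
  induction n using Nat.strong_induction_on with
  | _ n ih =>
  intro u v hu hv hcl hm
  by_cases hcomm : u ++ v = v ++ u
  · exact absurd hcomm (fun h => no_commuting_basis hcl h)
  by_cases hsuf1 : u <:+ v
  · obtain ⟨x, hx⟩ := hsuf1
    have hxne : x ≠ [] := by
      rintro rfl
      simp only [List.nil_append] at hx
      exact hcomm (by rw [hx])
    refine ⟨1, u, v, hu, hv, by simp, by simp, hcl, Or.inr (Or.inl ⟨x, hxne, hx.symm⟩)⟩
  by_cases hsuf2 : v <:+ u
  · obtain ⟨x, hx⟩ := hsuf2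
    have hxne : x ≠ [] := by
      rintro rfl
      simp only [List.nil_append] at hx
      exact hcomm (by rw [hx])
    refine ⟨1, u, v, hu, hv, by simp, by simp, hcl, Or.inr (Or.inr ⟨x, hxne, hx.symm⟩)⟩
  by_cases hfirst : u.getD 0 0 = v.getD 0 0
  · -- rotate left by the common first letter
    obtain ⟨c, u₀, rfl⟩ : ∃ c u₀, u = c :: u₀ := by
      cases u with
      | nil => exact absurd rfl hu
      | cons c u₀ => exact ⟨c, u₀, rfl⟩
    obtain ⟨d, v₀, rfl⟩ : ∃ d v₀, v = d :: v₀ := by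
      cases v with
      | nil => exact absurd rfl hv
      | cons d v₀ => exact ⟨d, v₀, rfl⟩
    have hcd : c = d := by simpa using hfirst
    subst hcd
    -- rotated pair
    set u' := u₀ ++ [c] with hu'def
    set v' := v₀ ++ [c] with hv'def
    have hu' : u' ≠ [] := by simp [hu'def]
    have hv' : v' ≠ [] := by simp [hv'def]
    have hconju : toFG (c :: u₀) = FreeGroup.of c * toFG u' * (FreeGroup.of c)⁻¹ := by
      rw [hu'def, toFG_append, toFG_cons, toFG_singleton]
      group
    have hconjv : toFG (c :: v₀) = FreeGroup.of c * toFG v' * (FreeGroup.of c)⁻¹ := by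
      rw [hv'def, toFG_append, toFG_cons, toFG_singleton]
      group
    have hcl' : Subgroup.closure {toFG u', toFG v'} = ⊤ := by
      have h1 : toFG u' = (FreeGroup.of c)⁻¹ * toFG (c :: u₀) * ((FreeGroup.of c)⁻¹)⁻¹ := by
        rw [hconju]; group
      have h2 : toFG v' = (FreeGroup.of c)⁻¹ * toFG (c :: v₀) * ((FreeGroup.of c)⁻¹)⁻¹ := by
        rw [hconjv]; group
      rw [h1, h2]
      exact closure_conj _ hcl
    -- measure decreases
    have hmeas : lcpN (u' ++ v') (v' ++ u') + 1 ≤ n := by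
      have hXY : u' ++ v' = (u₀ ++ (c :: v₀)) ++ [c] := by
        simp [hu'def, hv'def]
      have hYX : v' ++ u' = (v₀ ++ (c :: u₀)) ++ [c] := by
        simp [hu'def, hv'def]
      have hlen : (u₀ ++ (c :: v₀)).length = (v₀ ++ (c :: u₀)).length := by
        simp; omega
      have hne : u₀ ++ (c :: v₀) ≠ v₀ ++ (c :: u₀) := by
        intro h
        apply hcomm
        show c :: (u₀ ++ (c :: v₀)) = c :: (v₀ ++ (c :: u₀))
        rw [h]
      have e1 : lcpN ((c :: u₀) ++ (c :: v₀)) ((c :: v₀) ++ (c :: u₀))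
          = lcpN (u₀ ++ (c :: v₀)) (v₀ ++ (c :: u₀)) + 1 := by
        show lcpN (c :: (u₀ ++ (c :: v₀))) (c :: (v₀ ++ (c :: u₀))) = _
        rw [lcpN_cons, if_pos rfl]
      rw [hXY, hYX, lcpN_append_single hlen hne]
      omega
    obtain ⟨w₀, u₂, v₂, h1, h2, h3, h4, h5, h6⟩ :=
      ih (n - 1) (by omega) u' v' hu' hv' hcl' (by omega)
    refine ⟨FreeGroup.of c * w₀, u₂, v₂, h1, h2, ?_, ?_, h5, h6⟩
    · rw [hconju, h3]; group
    · rw [hconjv, h4]; group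
  · -- first letters differ: theta graph rigidity
    obtain ⟨u₁, v₁, s, hus, hvs, hdisj⟩ := exists_lcs u v
    have hu₁ : u₁ ≠ [] := by
      intro h
      rw [h, List.nil_append] at hus
      apply hsuf1
      exact ⟨v₁, by rw [hus]; exact hvs.symm⟩
    have hv₁ : v₁ ≠ [] := by
      intro h
      rw [h, List.nil_append] at hvs
      apply hsuf2
      exact ⟨u₁, by rw [hvs]; exact hus.symm⟩
    have hlast : u₁.getD (u₁.length - 1) 0 ≠ v₁.getD (v₁.length - 1) 0 := by
      rcases hdisj with h | h | h
      · exact absurd h hu₁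
      · exact absurd h hv₁
      · exact h
    have hfirst' : u₁.getD 0 0 ≠ v₁.getD 0 0 := by
      intro h
      apply hfirst
      rw [hus, hvs, List.getD_append _ _ _ _ (List.length_pos_iff.mpr hu₁),
        List.getD_append _ _ _ _ (List.length_pos_iff.mpr hv₁)]
      exact h
    have hbase := theta_key hu₁ hv₁ hfirst' hlast (by rw [← hus, ← hvs]; exact hcl)
    refine ⟨1, u, v, hu, hv, by simp, by simp, hcl, Or.inl ?_⟩
    show (u = [0] ∧ v = [1]) ∨ (u = [1] ∧ v = [0])
    rcases hbase with ⟨h1, h2⟩ | ⟨h1, h2⟩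
    · exact Or.inl ⟨hus.trans h1, hvs.trans h2⟩
    · exact Or.inr ⟨hus.trans h1, hvs.trans h2⟩

end TwoSubst
namespace TwoSubst

/-! ### Derivations of positive generating pairs -/

/-- Pairs derivable from the base pairs by the two elementary positive moves. -/
inductive Deriv : List A2 → List A2 → Prop
  | base1 : Deriv [0] [1]
  | base2 : Deriv [1] [0]
  | moveA {u v : List A2} : Deriv u v → Deriv u (v ++ u)
  | moveB {u v : List A2} : Deriv u v → Deriv (u ++ v) v

lemma Deriv.ne_nil {u v : List A2} (h : Deriv u v) : u ≠ [] ∧ v ≠ [] := by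
  induction h with
  | base1 => exact ⟨by simp, by simp⟩
  | base2 => exact ⟨by simp, by simp⟩
  | moveA _ ih => exact ⟨ih.1, by simp [ih.1]⟩
  | moveB _ ih => exact ⟨by simp [ih.2], ih.2⟩

/-- Counts are preserved by conjugation in the free group. -/
lemma counts_eq_of_conj {u u' : List A2} {w : FreeGroup A2}
    (h : toFG u = w * toFG u' * w⁻¹) : ∀ i, u.count i = u'.count i := by
  intro i
  have key : expSum i (toFG u) = expSum i (toFG u') := by
    rw [h, map_mul, map_mul, map_inv, mul_comm ((expSum i) w), mul_inv_cancel_right]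
  have h1 := congrArg Multiplicative.toAdd key
  rw [expSum_toFG, expSum_toFG] at h1
  exact_mod_cast h1

lemma length_eq_of_conj {u u' : List A2} {w : FreeGroup A2}
    (h : toFG u = w * toFG u' * w⁻¹) : u.length = u'.length := by
  rw [length_eq_counts, length_eq_counts, counts_eq_of_conj h 0, counts_eq_of_conj h 1]

/-- `closure {a, b * a} = closure {a, b}`. -/
lemma closure_pair_mul_left {G : Type*} [Group G] (a b : G) :
    Subgroup.closure ({a, b * a} : Set G) = Subgroup.closure ({a, b} : Set G) := by
  apply le_antisymm
  · rw [Subgroup.closure_le]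
    rintro g (rfl | rfl)
    · exact Subgroup.subset_closure (Set.mem_insert _ _)
    · exact Subgroup.mul_mem _
        (Subgroup.subset_closure (Set.mem_insert_of_mem _ rfl))
        (Subgroup.subset_closure (Set.mem_insert _ _))
  · rw [Subgroup.closure_le]
    rintro g (rfl | rfl)
    · exact Subgroup.subset_closure (Set.mem_insert _ _)
    · have h1 : g * a ∈ Subgroup.closure ({a, g * a} : Set G) :=
        Subgroup.subset_closure (Set.mem_insert_of_mem _ rfl)
      have h2 : a ∈ Subgroup.closure ({a, g * a} : Set G) :=
        Subgroup.subset_closure (Set.mem_insert _ _)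
      simpa using Subgroup.mul_mem _ h1 (Subgroup.inv_mem _ h2)

/-- `closure {a * b, b} = closure {a, b}`. -/
lemma closure_pair_mul_right {G : Type*} [Group G] (a b : G) :
    Subgroup.closure ({a * b, b} : Set G) = Subgroup.closure ({a, b} : Set G) := by
  apply le_antisymm
  · rw [Subgroup.closure_le]
    rintro g (rfl | rfl)
    · exact Subgroup.mul_mem _
        (Subgroup.subset_closure (Set.mem_insert _ _))
        (Subgroup.subset_closure (Set.mem_insert_of_mem _ rfl))
    · exact Subgroup.subset_closure (Set.mem_insert_of_mem _ rfl)
  · rw [Subgroup.closure_le]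
    rintro g (rfl | rfl)
    · have h1 : g * b ∈ Subgroup.closure ({g * b, b} : Set G) :=
        Subgroup.subset_closure (Set.mem_insert _ _)
      have h2 : b ∈ Subgroup.closure ({g * b, b} : Set G) :=
        Subgroup.subset_closure (Set.mem_insert_of_mem _ rfl)
      simpa using Subgroup.mul_mem _ h1 (Subgroup.inv_mem _ h2)
    · exact Subgroup.subset_closure (Set.mem_insert_of_mem _ rfl)

lemma length_eq_of_counts {x y : List A2} (h : ∀ i, x.count i = y.count i) :
    x.length = y.length := by
  rw [length_eq_counts, length_eq_counts, h 0, h 1]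

lemma count_append_cancel {x y x' y' : List A2} (h1 : ∀ i, x.count i = x'.count i)
    (h2 : ∀ i, (y ++ x).count i = (y' ++ x').count i) :
    ∀ i, y.count i = y'.count i := by
  intro i
  have ha := h1 i
  have hb := h2 i
  simp only [List.count_append] at hb
  omega

lemma count_append_cancel2 {x y x' y' : List A2} (h1 : ∀ i, y.count i = y'.count i)
    (h2 : ∀ i, (x ++ y).count i = (x' ++ y').count i) :
    ∀ i, x.count i = x'.count i := by
  intro i
  have ha := h1 i
  have hb := h2 i
  simp only [List.count_append] at hb
  omega

/-- **Structure theorem.** Every positive generating pair of `F₂` is conjugate to a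
derivable pair. -/
lemma structure_thm (N : ℕ) : ∀ u v : List A2, u.length + v.length ≤ N → u ≠ [] → v ≠ [] →
    Subgroup.closure {toFG u, toFG v} = ⊤ →
    ∃ (w : FreeGroup A2) (u₀ v₀ : List A2), Deriv u₀ v₀ ∧
      toFG u = w * toFG u₀ * w⁻¹ ∧ toFG v = w * toFG v₀ * w⁻¹ := by
  induction N using Nat.strong_induction_on with
  | _ N ih =>
  intro u v hN hu hv hcl
  obtain ⟨w₁, u', v', hu', hv', hcu, hcv, hcl', hshape⟩ :=
    spade (lcpN (u ++ v) (v ++ u)) u v hu hv hcl (le_refl _)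
  have hlu : u'.length = u.length := (length_eq_of_conj hcu).symm
  have hlv : v'.length = v.length := (length_eq_of_conj hcv).symm
  rcases hshape with hbase | ⟨x, hx, hxe⟩ | ⟨x, hx, hxe⟩
  · rcases hbase with ⟨h1, h2⟩ | ⟨h1, h2⟩
    · exact ⟨w₁, [0], [1], Deriv.base1, by rw [← h1]; exact hcu, by rw [← h2]; exact hcv⟩
    · exact ⟨w₁, [1], [0], Deriv.base2, by rw [← h1]; exact hcu, by rw [← h2]; exact hcv⟩
  · -- v' = x ++ u' : recurse on (u', x)
    have hxfg : toFG v' = toFG x * toFG u' := by rw [hxe, toFG_append]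
    have hclx : Subgroup.closure {toFG u', toFG x} = ⊤ := by
      have : ({toFG u', toFG x * toFG u'} : Set (FreeGroup A2))
          = {toFG u', toFG v'} := by rw [hxfg]
      rw [← closure_pair_mul_left (toFG u') (toFG x), this, hcl']
    have hxlen : u'.length + x.length < N := by
      have h1 : v'.length = x.length + u'.length := by rw [hxe]; simp
      have h2 : 1 ≤ u'.length := List.length_pos_iff.mpr hu'
      omega
    obtain ⟨w₂, u₀, v₀, hD, hc1, hc2⟩ :=
      ih (u'.length + x.length) (by omega) u' x (le_refl _) hu' hx hclx
    refine ⟨w₁ * w₂, u₀, v₀ ++ u₀, Deriv.moveA hD, ?_, ?_⟩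
    · rw [hcu, hc1]; group
    · rw [hcv, hxfg, hc1, hc2, toFG_append]; group
  · -- u' = x ++ v' : recurse on (x, v')
    have hxfg : toFG u' = toFG x * toFG v' := by rw [hxe, toFG_append]
    have hclx : Subgroup.closure {toFG x, toFG v'} = ⊤ := by
      have : ({toFG x * toFG v', toFG v'} : Set (FreeGroup A2))
          = {toFG u', toFG v'} := by rw [hxfg]
      rw [← closure_pair_mul_right (toFG x) (toFG v'), this, hcl']
    have hxlen : x.length + v'.length < N := by
      have h1 : u'.length = x.length + v'.length := by rw [hxe]; simp
      have h2 : 1 ≤ v'.length := List.length_pos_iff.mpr hv'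
      omega
    obtain ⟨w₂, u₀, v₀, hD, hc1, hc2⟩ :=
      ih (x.length + v'.length) (by omega) x v' (le_refl _) hx hv' hclx
    refine ⟨w₁ * w₂, u₀ ++ v₀, v₀, Deriv.moveB hD, ?_, ?_⟩
    · rw [hcu, hxfg, hc1, hc2, toFG_append]; group
    · rw [hcv, hc2]; group

/-- **Uniqueness.** Two derivable pairs with the same letter counts are conjugate. -/
lemma deriv_unique {u v : List A2} (h1 : Deriv u v) :
    ∀ u' v' : List A2, Deriv u' v' → (∀ i, u.count i = u'.count i) →
    (∀ i, v.count i = v'.count i) →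
    ∃ w : FreeGroup A2, toFG u = w * toFG u' * w⁻¹ ∧ toFG v = w * toFG v' * w⁻¹ := by
  induction h1 with
  | base1 =>
    intro u' v' h2 hcu hcv
    cases h2 with
    | base1 => exact ⟨1, by simp, by simp⟩
    | base2 => exact absurd (hcu 0) (by simp)
    | moveA h0 =>
      exfalso
      have hl := length_eq_of_counts hcv
      have := List.length_pos_iff.mpr h0.ne_nil.1
      have := List.length_pos_iff.mpr h0.ne_nil.2
      simp only [List.length_append, List.length_cons, List.length_nil] at hl
      omega
    | moveB h0 =>
      exfalso
      have hl := length_eq_of_counts hcu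
      have := List.length_pos_iff.mpr h0.ne_nil.1
      have := List.length_pos_iff.mpr h0.ne_nil.2
      simp only [List.length_append, List.length_cons, List.length_nil] at hl
      omega
  | base2 =>
    intro u' v' h2 hcu hcv
    cases h2 with
    | base2 => exact ⟨1, by simp, by simp⟩
    | base1 => exact absurd (hcu 0) (by simp)
    | moveA h0 =>
      exfalso
      have hl := length_eq_of_counts hcv
      have := List.length_pos_iff.mpr h0.ne_nil.1
      have := List.length_pos_iff.mpr h0.ne_nil.2
      simp only [List.length_append, List.length_cons, List.length_nil] at hl
      omega
    | moveB h0 =>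
      exfalso
      have hl := length_eq_of_counts hcu
      have := List.length_pos_iff.mpr h0.ne_nil.1
      have := List.length_pos_iff.mpr h0.ne_nil.2
      simp only [List.length_append, List.length_cons, List.length_nil] at hl
      omega
  | moveA h0 ih =>
    intro u' v' h2 hcu hcv
    cases h2 with
    | base1 =>
      exfalso
      have hl := length_eq_of_counts hcv
      have := List.length_pos_iff.mpr h0.ne_nil.1
      have := List.length_pos_iff.mpr h0.ne_nil.2
      simp only [List.length_append, List.length_cons, List.length_nil] at hl
      omega
    | base2 =>
      exfalso
      have hl := length_eq_of_counts hcv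
      have := List.length_pos_iff.mpr h0.ne_nil.1
      have := List.length_pos_iff.mpr h0.ne_nil.2
      simp only [List.length_append, List.length_cons, List.length_nil] at hl
      omega
    | moveA h0' =>
      have hcv' := count_append_cancel hcu hcv
      obtain ⟨w, hw1, hw2⟩ := ih _ _ h0' hcu hcv'
      refine ⟨w, hw1, ?_⟩
      rw [toFG_append, toFG_append, hw1, hw2]
      group
    | moveB h0' =>
      exfalso
      have l1 := length_eq_of_counts hcu
      have l2 := length_eq_of_counts hcv
      have := List.length_pos_iff.mpr h0.ne_nil.2
      have := List.length_pos_iff.mpr h0'.ne_nil.1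
      have := List.length_pos_iff.mpr h0'.ne_nil.2
      simp only [List.length_append] at l1 l2
      omega
  | moveB h0 ih =>
    intro u' v' h2 hcu hcv
    cases h2 with
    | base1 =>
      exfalso
      have hl := length_eq_of_counts hcu
      have := List.length_pos_iff.mpr h0.ne_nil.1
      have := List.length_pos_iff.mpr h0.ne_nil.2
      simp only [List.length_append, List.length_cons, List.length_nil] at hl
      omega
    | base2 =>
      exfalso
      have hl := length_eq_of_counts hcu
      have := List.length_pos_iff.mpr h0.ne_nil.1
      have := List.length_pos_iff.mpr h0.ne_nil.2
      simp only [List.length_append, List.length_cons, List.length_nil] at hl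
      omega
    | moveA h0' =>
      exfalso
      have l1 := length_eq_of_counts hcu
      have l2 := length_eq_of_counts hcv
      have := List.length_pos_iff.mpr h0.ne_nil.1
      have := List.length_pos_iff.mpr h0'.ne_nil.2
      simp only [List.length_append] at l1 l2
      omega
    | moveB h0' =>
      have hcu' := count_append_cancel2 hcv hcu
      obtain ⟨w, hw1, hw2⟩ := ih _ _ h0' hcu' hcv
      refine ⟨w, ?_, hw2⟩
      rw [toFG_append, toFG_append, hw1, hw2]
      group

/-- **Conjugacy theorem.** Two positive generating pairs of `F₂` with the same letter
counts are conjugate by a single element of `F₂`. -/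
theorem conj_thm {u v u' v' : List A2} (hu : u ≠ []) (hv : v ≠ [])
    (hu' : u' ≠ []) (hv' : v' ≠ [])
    (hcl : Subgroup.closure {toFG u, toFG v} = ⊤)
    (hcl' : Subgroup.closure {toFG u', toFG v'} = ⊤)
    (hcu : ∀ i, u.count i = u'.count i) (hcv : ∀ i, v.count i = v'.count i) :
    ∃ w : FreeGroup A2, toFG u = w * toFG u' * w⁻¹ ∧ toFG v = w * toFG v' * w⁻¹ := by
  obtain ⟨w₁, u₀, v₀, hD, hc1, hc2⟩ :=
    structure_thm (u.length + v.length) u v (le_refl _) hu hv hcl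
  obtain ⟨w₂, u₀', v₀', hD', hc1', hc2'⟩ :=
    structure_thm (u'.length + v'.length) u' v' (le_refl _) hu' hv' hcl'
  have hcu0 : ∀ i, u₀.count i = u₀'.count i := by
    intro i
    rw [← counts_eq_of_conj hc1 i, ← counts_eq_of_conj hc1' i]
    exact hcu i
  have hcv0 : ∀ i, v₀.count i = v₀'.count i := by
    intro i
    rw [← counts_eq_of_conj hc2 i, ← counts_eq_of_conj hc2' i]
    exact hcv i
  obtain ⟨w₃, hw1, hw2⟩ := deriv_unique hD u₀' v₀' hD' hcu0 hcv0
  refine ⟨w₁ * w₃ * w₂⁻¹, ?_, ?_⟩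
  · rw [hc1, hw1]
    have : toFG u₀' = w₂⁻¹ * toFG u' * w₂ := by rw [hc1']; group
    rw [this]; group
  · rw [hc2, hw2]
    have : toFG v₀' = w₂⁻¹ * toFG v' * w₂ := by rw [hc2']; group
    rw [this]; group

end TwoSubst
namespace TwoSubst

/-! ### Assembly: substitutions, reciprocals, self-duality -/

lemma closure_subst (σ : Subst) (hsurj : Function.Surjective (endo σ)) :
    Subgroup.closure {toFG (σ 0), toFG (σ 1)} = ⊤ := by
  rw [eq_top_iff]
  intro g hg
  clear hg
  obtain ⟨x, rfl⟩ := hsurj g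
  induction x using FreeGroup.induction_on with
  | C1 => simpa using Subgroup.one_mem _
  | of i =>
    rw [endo_of]
    fin_cases i
    · exact Subgroup.subset_closure (Set.mem_insert _ _)
    · exact Subgroup.subset_closure (Set.mem_insert_of_mem _ rfl)
  | inv_of i ih =>
    rw [map_inv]
    exact Subgroup.inv_mem _ ih
  | mul x y ihx ihy =>
    rw [map_mul]
    exact Subgroup.mul_mem _ ihx ihy

lemma tauA_invol (x : FreeGroup A2) : tauA (tauA x) = x := by
  have h : (tauA : FreeGroup A2 →* FreeGroup A2).comp tauA = MonoidHom.id _ := by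
    apply FreeGroup.ext_hom
    intro i
    have h0 : tauA (FreeGroup.of (0 : A2)) = (FreeGroup.of (0 : A2))⁻¹ :=
      FreeGroup.lift_apply_of
    have h1 : tauA (FreeGroup.of (1 : A2)) = FreeGroup.of (1 : A2) :=
      FreeGroup.lift_apply_of
    show tauA (tauA (FreeGroup.of i)) = FreeGroup.of i
    fin_cases i <;> simp [h0, h1, map_inv]
  exact DFunLike.congr_fun h x

section Main

variable {σ ρ : Subst} {φ : Monoid.End (FreeGroup A2)}

lemma endo_surj_of_recip (hrecip : IsReciprocal σ ρ φ) :
    Function.Surjective (endo σ) := fun y => ⟨φ y, hrecip.2.1 y⟩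

lemma rho_surj (hrecip : IsReciprocal σ ρ φ) : Function.Surjective (endo ρ) := by
  intro y
  refine ⟨tauA (endo σ (tauA y)), ?_⟩
  rw [hrecip.2.2.2, tauA_invol, hrecip.1, tauA_invol]

lemma abelMatrix_phi (hrecip : IsReciprocal σ ρ φ) (hdet : (M σ).det = 1) :
    abelMatrix φ = adj2 (M σ) := by
  have h1 : abelMatrix (φ * endo σ) = abelMatrix φ * abelMatrix (endo σ) :=
    abelMatrix_comp _ φ (endo σ) (fun _ => rfl)
  have h2 : abelMatrix (φ * endo σ) = 1 := abelMatrix_id _ (fun x => hrecip.1 x)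
  rw [abelMatrix_endo] at h1
  exact left_inv_eq_adj2 hdet (by rw [← h1, h2])

lemma M_rho (hrecip : IsReciprocal σ ρ φ) (hdet : (M σ).det = 1) :
    M ρ = !![(-1 : ℤ), 0; 0, 1] * adj2 (M σ) * !![(-1 : ℤ), 0; 0, 1] := by
  have h1 : abelMatrix (endo ρ) = abelMatrix (tauA * φ) * abelMatrix tauA :=
    abelMatrix_comp _ (tauA * φ) tauA (fun x => hrecip.2.2.2 x)
  have h2 : abelMatrix (tauA * φ) = abelMatrix tauA * abelMatrix φ :=
    abelMatrix_comp _ tauA φ (fun _ => rfl)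
  rw [abelMatrix_endo] at h1
  rw [h1, h2, abelMatrix_tauA, abelMatrix_phi hrecip hdet]

lemma M_Esub : M Esub = !![(0 : ℤ), 1; 1, 0] := by
  ext i j
  fin_cases i <;> fin_cases j <;> simp [M_apply, Esub] <;> rfl

lemma Esub_ne (i : A2) : Esub i ≠ [] := by fin_cases i <;> simp [Esub]

lemma endoE_invol (x : FreeGroup A2) : endo Esub (endo Esub x) = x := by
  have h : (endo Esub : FreeGroup A2 →* FreeGroup A2).comp (endo Esub)
      = MonoidHom.id _ := by
    apply FreeGroup.ext_hom
    intro i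
    have h0 : Esub (0 : A2) = [1] := rfl
    have h1 : Esub (1 : A2) = [0] := rfl
    fin_cases i
    · show endo Esub (endo Esub (FreeGroup.of (0 : A2))) = FreeGroup.of (0 : A2)
      rw [endo_of, h0, toFG_singleton, endo_of, h1, toFG_singleton]
    · show endo Esub (endo Esub (FreeGroup.of (1 : A2))) = FreeGroup.of (1 : A2)
      rw [endo_of, h1, toFG_singleton, endo_of, h0, toFG_singleton]
  exact DFunLike.congr_fun h x

/-- Matrix computations for the two self-duality cases. -/
lemma DadjD_eq {A : Matrix (Fin 2) (Fin 2) ℤ} (h : A 0 0 = A 1 1) :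
    !![(-1 : ℤ), 0; 0, 1] * adj2 A * !![(-1 : ℤ), 0; 0, 1] = A := by
  obtain ⟨p, q, r, s, rfl⟩ : ∃ p q r s, A = !![p, q; r, s] :=
    ⟨_, _, _, _, Matrix.eta_fin_two A⟩
  revert h
  simp [adj2, Matrix.mul_fin_two, ← Matrix.ext_iff, Fin.forall_fin_two, funext_iff]
  omega

lemma SD_of_DadjD {A : Matrix (Fin 2) (Fin 2) ℤ}
    (h : A = !![(-1 : ℤ), 0; 0, 1] * adj2 A * !![(-1 : ℤ), 0; 0, 1]) :
    A 0 0 = A 1 1 := by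
  obtain ⟨p, q, r, s, rfl⟩ : ∃ p q r s, A = !![p, q; r, s] :=
    ⟨_, _, _, _, Matrix.eta_fin_two A⟩
  revert h
  simp [adj2, Matrix.mul_fin_two, ← Matrix.ext_iff, Fin.forall_fin_two, funext_iff]
  omega

lemma SDadjDS_eq {A : Matrix (Fin 2) (Fin 2) ℤ} (h : A 0 1 = A 1 0) :
    !![(0 : ℤ), 1; 1, 0] * (!![(-1 : ℤ), 0; 0, 1] * adj2 A * !![(-1 : ℤ), 0; 0, 1]) *
      !![(0 : ℤ), 1; 1, 0] = A := by
  obtain ⟨p, q, r, s, rfl⟩ : ∃ p q r s, A = !![p, q; r, s] :=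
    ⟨_, _, _, _, Matrix.eta_fin_two A⟩
  revert h
  simp [adj2, Matrix.mul_fin_two, ← Matrix.ext_iff, Fin.forall_fin_two, funext_iff]
  omega

lemma SD_of_SDadjDS {A : Matrix (Fin 2) (Fin 2) ℤ}
    (h : A = !![(0 : ℤ), 1; 1, 0] *
      (!![(-1 : ℤ), 0; 0, 1] * adj2 A * !![(-1 : ℤ), 0; 0, 1]) * !![(0 : ℤ), 1; 1, 0]) :
    A 0 1 = A 1 0 := by
  obtain ⟨p, q, r, s, rfl⟩ : ∃ p q r s, A = !![p, q; r, s] :=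
    ⟨_, _, _, _, Matrix.eta_fin_two A⟩
  revert h
  simp [adj2, Matrix.mul_fin_two, ← Matrix.ext_iff, Fin.forall_fin_two, funext_iff]
  omega

lemma counts_of_M_eq {τ₁ τ₂ : Subst} (h : M τ₁ = M τ₂) (j i : A2) :
    (τ₁ j).count i = (τ₂ j).count i := by
  have h2 := congrFun (congrFun h i) j
  rw [M_apply, M_apply] at h2
  exact_mod_cast h2

lemma conj_of_pairs (τ₁ τ₂ : Subst) (w : FreeGroup A2)
    (h0 : toFG (τ₁ 0) = w * toFG (τ₂ 0) * w⁻¹)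
    (h1 : toFG (τ₁ 1) = w * toFG (τ₂ 1) * w⁻¹) : Conj τ₁ τ₂ := by
  refine ⟨w, ?_⟩
  have hhom : (endo τ₁ : FreeGroup A2 →* FreeGroup A2)
      = ((MulAut.conj w).toMonoidHom.comp (endo τ₂)) := by
    apply FreeGroup.ext_hom
    intro i
    show endo τ₁ (FreeGroup.of i) = (MulAut.conj w).toMonoidHom (endo τ₂ (FreeGroup.of i))
    have hc : (MulAut.conj w).toMonoidHom (endo τ₂ (FreeGroup.of i))
        = w * endo τ₂ (FreeGroup.of i) * w⁻¹ := rfl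
    rw [hc, endo_of, endo_of]
    fin_cases i
    · exact h0
    · exact h1
  intro x
  have := DFunLike.congr_fun hhom x
  exact this

/-- The central equivalence: self-duality is equivalent to the symmetry condition on
the substitution matrix. -/
theorem selfdual_iff_SD (hne : NonErasing σ) (hdet : (M σ).det = 1)
    (hrecip : IsReciprocal σ ρ φ) :
    SelfDual σ ρ ↔ (M σ 0 0 = M σ 1 1 ∨ M σ 0 1 = M σ 1 0) := by
  have hMρ := M_rho hrecip hdet
  have hτ' : ∀ x, endo (comp Esub (comp ρ Esub)) x = endo Esub (endo ρ (endo Esub x)) := by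
    intro x
    rw [endo_comp_apply, endo_comp_apply]
  have hMτ' : M (comp Esub (comp ρ Esub)) =
      !![(0 : ℤ), 1; 1, 0] * (!![(-1 : ℤ), 0; 0, 1] * adj2 (M σ) * !![(-1 : ℤ), 0; 0, 1]) *
        !![(0 : ℤ), 1; 1, 0] := by
    rw [M_comp, M_comp, M_Esub, hMρ, ← mul_assoc]
  constructor
  · rintro (⟨w, hw⟩ | ⟨w, hw⟩)
    · left
      have hM : M σ = M ρ := by
        rw [← abelMatrix_endo, ← abelMatrix_endo]
        exact abelMatrix_conj _ _ w hw
      exact SD_of_DadjD (hM.trans hMρ)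
    · right
      have hM : M σ = M (comp Esub (comp ρ Esub)) := by
        rw [← abelMatrix_endo, ← abelMatrix_endo]
        exact abelMatrix_conj _ _ w hw
      exact SD_of_SDadjDS (hM.trans hMτ')
  · have hσsurj := endo_surj_of_recip hrecip
    have hρsurj := rho_surj hrecip
    have hclσ := closure_subst σ hσsurj
    rintro (hd | hd)
    · left
      have hM : M ρ = M σ := by rw [hMρ]; exact DadjD_eq hd
      have hclρ := closure_subst ρ hρsurj
      obtain ⟨w, hw0, hw1⟩ := conj_thm (hne 0) (hne 1) (hrecip.2.2.1 0) (hrecip.2.2.1 1)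
        hclσ hclρ
        (fun i => (counts_of_M_eq hM.symm 0 i))
        (fun i => (counts_of_M_eq hM.symm 1 i))
      exact conj_of_pairs σ ρ w hw0 hw1
    · right
      set τ' := comp Esub (comp ρ Esub) with hτ'def
      have hM : M τ' = M σ := by rw [hMτ']; exact SDadjDS_eq hd
      have hτ'ne : NonErasing τ' := by
        intro i
        apply apply_ne_nil Esub Esub_ne
        apply apply_ne_nil ρ hrecip.2.2.1
        exact Esub_ne i
      have hτ'surj : Function.Surjective (endo τ') := by
        intro y
        obtain ⟨z, hz⟩ := hρsurj (endo Esub y)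
        refine ⟨endo Esub z, ?_⟩
        rw [hτ' _, endoE_invol, hz, endoE_invol]
      have hclτ' := closure_subst τ' hτ'surj
      obtain ⟨w, hw0, hw1⟩ := conj_thm (hne 0) (hne 1) (hτ'ne 0) (hτ'ne 1)
        hclσ hclτ'
        (fun i => (counts_of_M_eq hM.symm 0 i))
        (fun i => (counts_of_M_eq hM.symm 1 i))
      exact conj_of_pairs σ τ' w hw0 hw1

end Main

end TwoSubst

open TwoSubst in
/-- For a primitive invertible substitution `σ` on `{a,b}` with
`det M_σ = 1` (with reciprocal `ρ = σ̄`), the following are equivalent: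
(1) `σ` is selfdual; (2) `M_σ = [[m,k],[(m²−1)/k,m]]` for positive integers `m,k` with
`k ∣ m²−1`, or `M_σ = [[m,k],[k,(k²+1)/m]]` for positive integers `m,k` with
`m ∣ k²+1`; (3) `Q⁻¹·M_σ·Q = M_σ⁻¹` for `Q = [[−1,0],[0,1]]` or `Q = [[0,−1],[1,0]]`;
(4) `Pᵀ·M_σ·P = M_σᵀ` for `P = [[0,1],[1,0]]` or `P = 1`. -/
theorem selfdual_tfae (σ ρ : Subst) (hne : NonErasing σ)
    (hprim : Primitive σ) (hdet : (M σ).det = 1)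
    (φ : Monoid.End (FreeGroup A2)) (hrecip : IsReciprocal σ ρ φ) :
    (SelfDual σ ρ ↔
      ((∃ m k : ℤ, 0 < m ∧ 0 < k ∧ k ∣ m ^ 2 - 1 ∧
          M σ = !![m, k; (m ^ 2 - 1) / k, m]) ∨
        (∃ m k : ℤ, 0 < m ∧ 0 < k ∧ m ∣ k ^ 2 + 1 ∧
          M σ = !![m, k; k, (k ^ 2 + 1) / m]))) ∧
    (SelfDual σ ρ ↔
      ((!![(-1 : ℤ), 0; 0, 1])⁻¹ * M σ * !![(-1 : ℤ), 0; 0, 1] = (M σ)⁻¹ ∨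
        (!![(0 : ℤ), -1; 1, 0])⁻¹ * M σ * !![(0 : ℤ), -1; 1, 0] = (M σ)⁻¹)) ∧
    (SelfDual σ ρ ↔
      ((!![(0 : ℤ), 1; 1, 0])ᵀ * M σ * !![(0 : ℤ), 1; 1, 0] = (M σ)ᵀ ∨
        (1 : Matrix (Fin 2) (Fin 2) ℤ)ᵀ * M σ * (1 : Matrix (Fin 2) (Fin 2) ℤ) = (M σ)ᵀ)) := by
  have hpos := M_entries_pos hprim hdet
  have hmain := selfdual_iff_SD hne hdet hrecip
  exact ⟨hmain.trans (cond1_iff hdet hpos).symm,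
    hmain.trans (cond2_iff hdet).symm,
    hmain.trans (cond3_iff (M σ)).symm⟩
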